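/- Let {X_n}_n be a sequence of Hermitian matrices with X_n of order d_n, d_n → ∞. Let P_n ∈ ℂ^{d_n×d_n'} be a compression matrix with d_n' < d_n and P_n* P_n = I_{d_n'}, and set Y_{d_n'} = P_n* X_n P_n. If liminf_{n→∞} d_n'/d_n > 0 and {X_n}_n ∼_λ α I_s for a real constant α (i.e. {X_n}_n is distributed in the eigenvalue sense as the constant s×s matrix α I_s), then {Y_{d_n'}}_n ∼_λ α I_s. -/

import Mathlib

open MeasureTheory Filter Topology Matrix
open scoped Real

noncomputable section

/-- Sum of `F` over the eigenvalues (with multiplicity) of a square complex matrix,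
the eigenvalues being the roots of the characteristic polynomial. -/
def eigSum {ι : Type*} [Fintype ι] [DecidableEq ι] (F : ℂ → ℂ) (A : Matrix ι ι ℂ) : ℂ :=
  (A.charpoly.roots.map F).sum

/-- Sum of `F` over the singular values `σ_1, …, σ_{min(#rows,#cols)}` of a rectangular
complex matrix: the singular values are the square roots of the eigenvalues of `A * Aᴴ`,
discarding the `#rows - min(#rows,#cols)` superfluous zero ones. -/
def svSum {m n : Type*} [Fintype m] [Fintype n] [DecidableEq m]
    (F : ℝ → ℂ) (A : Matrix m n ℂ) : ℂ :=
  (∑ i, F (Real.sqrt ((Matrix.isHermitian_mul_conjTranspose_self A).eigenvalues i))) -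
    ((Fintype.card m - min (Fintype.card m) (Fintype.card n) : ℕ) : ℂ) * F 0

/-- `{A_n}_n ∼_σ f` : the matrix-sequence `A` is distributed as the matrix-valued
symbol `f : Ω → ℂ^{ρ×τ}` in the sense of the singular values (Weyl sense). -/
def DistributedSV {Θ : Type*} [MeasureSpace Θ] (Ω : Set Θ)
    {ρ τ : Type*} [Fintype ρ] [Fintype τ] [DecidableEq ρ]
    (f : Θ → Matrix ρ τ ℂ)
    {ι κ : ℕ → Type} [∀ n, Fintype (ι n)] [∀ n, Fintype (κ n)] [∀ n, DecidableEq (ι n)]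
    (A : ∀ n, Matrix (ι n) (κ n) ℂ) : Prop :=
  ∀ F : ℝ → ℂ, Continuous F → HasCompactSupport F →
    Tendsto
      (fun n => ((min (Fintype.card (ι n)) (Fintype.card (κ n)) : ℕ) : ℂ)⁻¹ * svSum F (A n))
      atTop
      (𝓝 (((volume Ω).toReal : ℂ)⁻¹ *
        ∫ θ in Ω, ((min (Fintype.card ρ) (Fintype.card τ) : ℕ) : ℂ)⁻¹ * svSum F (f θ)))

/-- `{A_n}_n ∼_λ f` : the matrix-sequence `A` is distributed as the matrix-valued
symbol `f : Ω → ℂ^{ρ×ρ}` in the sense of the eigenvalues (Weyl sense). -/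
def DistributedEig {Θ : Type*} [MeasureSpace Θ] (Ω : Set Θ)
    {ρ : Type*} [Fintype ρ] [DecidableEq ρ]
    (f : Θ → Matrix ρ ρ ℂ)
    {ι : ℕ → Type} [∀ n, Fintype (ι n)] [∀ n, DecidableEq (ι n)]
    (A : ∀ n, Matrix (ι n) (ι n) ℂ) : Prop :=
  ∀ F : ℂ → ℂ, Continuous F → HasCompactSupport F →
    Tendsto (fun n => ((Fintype.card (ι n) : ℕ) : ℂ)⁻¹ * eigSum F (A n)) atTop
      (𝓝 (((volume Ω).toReal : ℂ)⁻¹ *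
        ∫ θ in Ω, ((Fintype.card ρ : ℕ) : ℂ)⁻¹ * eigSum F (f θ)))

/-- `{A_n}_n ∼_σ α I` (constant symbol `α I_s`, `α = 0` being the notion of a
zero-distributed matrix-sequence): the limit of the singular value averages is `F(α)`. -/
def DistributedSVConst (α : ℝ)
    {ι κ : ℕ → Type} [∀ n, Fintype (ι n)] [∀ n, Fintype (κ n)] [∀ n, DecidableEq (ι n)]
    (A : ∀ n, Matrix (ι n) (κ n) ℂ) : Prop :=
  ∀ F : ℝ → ℂ, Continuous F → HasCompactSupport F →
    Tendsto
      (fun n => ((min (Fintype.card (ι n)) (Fintype.card (κ n)) : ℕ) : ℂ)⁻¹ * svSum F (A n))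
      atTop (𝓝 (F α))

/-- `{A_n}_n ∼_λ α I` (constant symbol `α I_s`, `α` real): the limit of the eigenvalue
averages is `F(α)`. -/
def DistributedEigConst (α : ℝ)
    {ι : ℕ → Type} [∀ n, Fintype (ι n)] [∀ n, DecidableEq (ι n)]
    (A : ∀ n, Matrix (ι n) (ι n) ℂ) : Prop :=
  ∀ F : ℂ → ℂ, Continuous F → HasCompactSupport F →
    Tendsto (fun n => ((Fintype.card (ι n) : ℕ) : ℂ)⁻¹ * eigSum F (A n)) atTop
      (𝓝 (F (α : ℂ)))

/-- The `k`-th Fourier coefficient (computed entrywise) of a matrix-valued function on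
`[-π, π]`: `f̂_k = (1/2π) ∫_{-π}^{π} f(θ) e^{-ικθ} dθ`. -/
def fCoeff {ρ τ : Type*} (f : ℝ → Matrix ρ τ ℂ) (k : ℤ) : Matrix ρ τ ℂ :=
  Matrix.of fun a b =>
    ((2 * π : ℝ) : ℂ)⁻¹ *
      ∫ θ in (-π : ℝ)..π, f θ a b * Complex.exp (-(Complex.I * (k : ℂ) * (θ : ℂ)))

/-- The (rectangular) block Toeplitz matrix `T_{n,n'}(f) = [f̂_{i-j}]`, of size
`sn × tn'` when `f` is `s × t` matrix-valued. -/
def blockToeplitz {ρ τ : Type*} (f : ℝ → Matrix ρ τ ℂ) (n n' : ℕ) :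
    Matrix (Fin n × ρ) (Fin n' × τ) ℂ :=
  Matrix.of fun p q => fCoeff f (((p.1 : ℕ) : ℤ) - ((q.1 : ℕ) : ℤ)) p.2 q.2

set_option maxHeartbeats 1000000

section ExtraDimHelpers

open Polynomial Finset

private lemma charpoly_unitary_conj {n : Type*} [Fintype n] [DecidableEq n]
    (U B : Matrix n n ℂ) (h1 : U * Uᴴ = 1) :
    (U * B * Uᴴ).charpoly = B.charpoly := by
  have key : charmatrix (U * B * Uᴴ) =
      U.map (C : ℂ →+* ℂ[X]) * charmatrix B * Uᴴ.map (C : ℂ →+* ℂ[X]) := by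
    rw [charmatrix, charmatrix, Matrix.mul_sub, Matrix.sub_mul]
    congr 1
    · have hc : Matrix.scalar n (X : ℂ[X]) * U.map (C : ℂ →+* ℂ[X])
          = U.map (C : ℂ →+* ℂ[X]) * Matrix.scalar n (X : ℂ[X]) :=
        (Matrix.scalar_commute (X : ℂ[X]) (fun r' => Commute.all _ r') _).eq
      rw [← hc, mul_assoc, ← Matrix.map_mul, h1, Matrix.map_one _ (map_zero _) (map_one _),
        mul_one]
    · simp only [RingHom.mapMatrix_apply, Matrix.map_mul]
  have hdet : (U.map (C : ℂ →+* ℂ[X])).det * (Uᴴ.map (C : ℂ →+* ℂ[X])).det = 1 := by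
    rw [← Matrix.det_mul, ← Matrix.map_mul, h1, Matrix.map_one _ (map_zero _) (map_one _),
      Matrix.det_one]
  rw [Matrix.charpoly, key, Matrix.det_mul, Matrix.det_mul, Matrix.charpoly]
  calc (U.map (C : ℂ →+* ℂ[X])).det * (charmatrix B).det * (Uᴴ.map (C : ℂ →+* ℂ[X])).det
      = (U.map (C : ℂ →+* ℂ[X])).det * (Uᴴ.map (C : ℂ →+* ℂ[X])).det * (charmatrix B).det := by
        ring
    _ = (charmatrix B).det := by rw [hdet, one_mul]

private lemma roots_charpoly_isHermitian {k : ℕ} (A : Matrix (Fin k) (Fin k) ℂ)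
    (hA : A.IsHermitian) :
    A.charpoly.roots = Finset.univ.val.map (fun i => (hA.eigenvalues i : ℂ)) := by
  classical
  set U : Matrix (Fin k) (Fin k) ℂ := (hA.eigenvectorUnitary : Matrix (Fin k) (Fin k) ℂ) with hUdef
  have hUU : U * Uᴴ = 1 := by
    have := (Matrix.mem_unitaryGroup_iff).mp (hA.eigenvectorUnitary).2
    simpa [Matrix.star_eq_conjTranspose] using this
  have hspec : A = U * Matrix.diagonal (fun i => (hA.eigenvalues i : ℂ)) * Uᴴ := by
    have := hA.spectral_theorem
    simp only [Unitary.conjStarAlgAut_apply, Unitary.coe_star, Matrix.star_eq_conjTranspose] at this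
    exact this
  have h1 : A.charpoly = (Matrix.diagonal (fun i => (hA.eigenvalues i : ℂ))).charpoly := by
    have h0 : A.charpoly
        = (U * Matrix.diagonal (fun i => (hA.eigenvalues i : ℂ)) * Uᴴ).charpoly := by
      rw [← hspec]
    rw [h0]
    exact charpoly_unitary_conj U _ hUU
  have h2 : (Matrix.diagonal (fun i => (hA.eigenvalues i : ℂ))).charpoly
      = ∏ i, (X - C ((hA.eigenvalues i : ℂ))) := by
    rw [Matrix.charpoly_of_upperTriangular _ (Matrix.blockTriangular_diagonal _)]
    exact Finset.prod_congr rfl fun i _ => by rw [Matrix.diagonal_apply_eq]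
  have h3 : ∏ i, (X - C ((hA.eigenvalues i : ℂ)))
      = ((Finset.univ.val.map (fun i => (hA.eigenvalues i : ℂ))).map
          (fun a => X - C a)).prod := by
    rw [Multiset.map_map, ← Finset.prod_map_val]
    rfl
  rw [h1, h2, h3, Polynomial.roots_multiset_prod_X_sub_C]

private lemma eigSum_isHermitian {k : ℕ} (F : ℂ → ℂ) (A : Matrix (Fin k) (Fin k) ℂ)
    (hA : A.IsHermitian) :
    eigSum F A = ∑ i, F ((hA.eigenvalues i : ℂ)) := by
  rw [eigSum, roots_charpoly_isHermitian A hA, Multiset.map_map, ← Finset.sum_map_val]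
  rfl

private lemma conj_dot {d d' : ℕ} (M : Matrix (Fin d) (Fin d') ℂ)
    (A : Matrix (Fin d) (Fin d) ℂ) (x : Fin d' → ℂ) :
    star (M *ᵥ x) ⬝ᵥ (A *ᵥ (M *ᵥ x)) = star x ⬝ᵥ ((Mᴴ * A * M) *ᵥ x) := by
  simp [Matrix.star_mulVec, Matrix.dotProduct_mulVec, Matrix.vecMul_vecMul, Matrix.mul_assoc]

private lemma diag_dot {k : ℕ} (r : Fin k → ℝ) (x : Fin k → ℂ) :
    star x ⬝ᵥ ((Matrix.diagonal (fun i => (r i : ℂ))) *ᵥ x)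
      = ((∑ i, r i * Complex.normSq (x i) : ℝ) : ℂ) := by
  rw [dotProduct, Complex.ofReal_sum]
  refine Finset.sum_congr rfl fun i _ => ?_
  rw [Matrix.mulVec_diagonal, Pi.star_apply, Complex.ofReal_mul,
    Complex.normSq_eq_conj_mul_self, Complex.star_def]
  ring

private lemma core_count {d d' : ℕ} (B : (Fin d' → ℂ) →ₗ[ℂ] (Fin d → ℂ))
    (μ : Fin d' → ℝ) (lam : Fin d → ℝ) (t : ℝ)
    (hq : ∀ c, ∑ j, μ j * Complex.normSq (c j) = ∑ i, lam i * Complex.normSq (B c i))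
    (hn : ∀ c, ∑ j, Complex.normSq (c j) = ∑ i, Complex.normSq (B c i))
    (S : Finset (Fin d')) (T : Finset (Fin d))
    (hS : ∀ j ∈ S, t ≤ μ j) (hT : ∀ i, i ∉ T → lam i < t) :
    S.card ≤ T.card := by
  classical
  by_contra hcon
  push_neg at hcon
  set ext : (↥S → ℂ) →ₗ[ℂ] (Fin d' → ℂ) :=
    { toFun := fun c j => if h : j ∈ S then c ⟨j, h⟩ else 0
      map_add' := fun a b => by funext j; by_cases h : j ∈ S <;> simp [h]
      map_smul' := fun m a => by funext j; by_cases h : j ∈ S <;> simp [h] } with hext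
  set L : (↥S → ℂ) →ₗ[ℂ] (↥T → ℂ) :=
    (LinearMap.funLeft ℂ ℂ (fun i : ↥T => (i : Fin d))).comp (B.comp ext) with hL
  have hnotinj : ¬ Function.Injective L := by
    intro hinj
    have hle := LinearMap.finrank_le_finrank_of_injective hinj
    rw [Module.finrank_pi, Module.finrank_pi, Fintype.card_coe, Fintype.card_coe] at hle
    omega
  rw [Function.not_injective_iff] at hnotinj
  obtain ⟨a, b, hab, hne⟩ := hnotinj
  set c : ↥S → ℂ := a - b with hcdef
  have hc0 : c ≠ 0 := sub_ne_zero.mpr hne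
  have hcker : L c = 0 := by rw [hcdef, map_sub, hab, sub_self]
  set ct : Fin d' → ℂ := ext c with hct
  have hsupp : ∀ j, j ∉ S → ct j = 0 := fun j h => by simp [hct, hext, h]
  have hctne : ∃ j ∈ S, ct j ≠ 0 := by
    obtain ⟨j0, hj0⟩ := Function.ne_iff.mp hc0
    refine ⟨(j0 : Fin d'), j0.2, ?_⟩
    have : ct (j0 : Fin d') = c j0 := by simp [hct, hext]
    rw [this]
    simpa using hj0
  have hBT : ∀ i ∈ T, B ct i = 0 := by
    intro i hi
    have h := congrFun (congrArg (fun (f : ↥T → ℂ) => f) hcker) ⟨i, hi⟩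
    simpa [hL, LinearMap.funLeft] using h
  have hNpos : 0 < ∑ j, Complex.normSq (ct j) := by
    obtain ⟨j, _, hj⟩ := hctne
    exact Finset.sum_pos' (fun j _ => Complex.normSq_nonneg _)
      ⟨j, Finset.mem_univ j, Complex.normSq_pos.mpr hj⟩
  have h1 : t * ∑ j, Complex.normSq (ct j) ≤ ∑ j, μ j * Complex.normSq (ct j) := by
    rw [Finset.mul_sum]
    refine Finset.sum_le_sum fun j _ => ?_
    by_cases h : j ∈ S
    · exact mul_le_mul_of_nonneg_right (hS j h) (Complex.normSq_nonneg _)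
    · simp [hsupp j h]
  have hBpos : 0 < ∑ i, Complex.normSq (B ct i) := by rw [← hn]; exact hNpos
  have hex : ∃ i, Complex.normSq (B ct i) ≠ 0 := by
    by_contra hno
    push_neg at hno
    simp only [hno] at hBpos
    simp at hBpos
  obtain ⟨i0, hi0⟩ := hex
  have hi0T : i0 ∉ T := fun h => hi0 (by rw [hBT i0 h]; simp)
  have h2 : ∑ i, lam i * Complex.normSq (B ct i) < t * ∑ i, Complex.normSq (B ct i) := by
    rw [Finset.mul_sum]
    refine Finset.sum_lt_sum (fun i _ => ?_) ⟨i0, Finset.mem_univ _, ?_⟩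
    · by_cases h : i ∈ T
      · simp [hBT i h]
      · exact mul_le_mul_of_nonneg_right (hT i h).le (Complex.normSq_nonneg _)
    · exact mul_lt_mul_of_pos_right (hT i0 hi0T)
        (lt_of_le_of_ne (Complex.normSq_nonneg _) (Ne.symm hi0))
  have hfin : t * ∑ j, Complex.normSq (ct j) < t * ∑ j, Complex.normSq (ct j) := by
    calc t * ∑ j, Complex.normSq (ct j)
        ≤ ∑ j, μ j * Complex.normSq (ct j) := h1
      _ = ∑ i, lam i * Complex.normSq (B ct i) := hq ct
      _ < t * ∑ i, Complex.normSq (B ct i) := h2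
      _ = t * ∑ j, Complex.normSq (ct j) := by rw [← hn]
  exact lt_irrefl _ hfin

end ExtraDimHelpers

private lemma count_lemma {d d' : ℕ} (X : Matrix (Fin d) (Fin d) ℂ) (hX : X.IsHermitian)
    (P : Matrix (Fin d) (Fin d') ℂ) (hP : Pᴴ * P = 1)
    (hY : (Pᴴ * X * P).IsHermitian) (t : ℝ) :
    ((Finset.univ.filter fun j => t ≤ hY.eigenvalues j).card
        ≤ (Finset.univ.filter fun i => t ≤ hX.eigenvalues i).card) ∧
    ((Finset.univ.filter fun j => hY.eigenvalues j ≤ t).card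
        ≤ (Finset.univ.filter fun i => hX.eigenvalues i ≤ t).card) := by
  classical
  set U : Matrix (Fin d) (Fin d) ℂ := (hX.eigenvectorUnitary : Matrix (Fin d) (Fin d) ℂ)
    with hUdef
  set V : Matrix (Fin d') (Fin d') ℂ := (hY.eigenvectorUnitary : Matrix (Fin d') (Fin d') ℂ)
    with hVdef
  set M : Matrix (Fin d) (Fin d') ℂ := Uᴴ * P * V with hMdef
  have hUU : U * Uᴴ = 1 := by
    have := (Matrix.mem_unitaryGroup_iff).mp (hX.eigenvectorUnitary).2
    simpa [Matrix.star_eq_conjTranspose, hUdef] using this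
  have hVV : Vᴴ * V = 1 := by
    have := (Matrix.mem_unitaryGroup_iff').mp (hY.eigenvectorUnitary).2
    simpa [Matrix.star_eq_conjTranspose, hVdef] using this
  have hMH : Mᴴ = Vᴴ * Pᴴ * U := by
    rw [hMdef, Matrix.conjTranspose_mul, Matrix.conjTranspose_mul,
      Matrix.conjTranspose_conjTranspose, Matrix.mul_assoc]
  have hMM : Mᴴ * M = 1 := by
    rw [hMH, hMdef]
    calc Vᴴ * Pᴴ * U * (Uᴴ * P * V) = Vᴴ * (Pᴴ * ((U * Uᴴ) * (P * V))) := by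
          simp only [Matrix.mul_assoc]
      _ = 1 := by rw [hUU, Matrix.one_mul, ← Matrix.mul_assoc Pᴴ P V, hP, Matrix.one_mul, hVV]
  have hXspec : U * Matrix.diagonal (fun i => (hX.eigenvalues i : ℂ)) * Uᴴ = X := by
    have h : X = U * Matrix.diagonal (fun i => (hX.eigenvalues i : ℂ)) * Uᴴ := by
      have h0 := hX.spectral_theorem
      simp only [Unitary.conjStarAlgAut_apply, Unitary.coe_star, Matrix.star_eq_conjTranspose] at h0
      exact h0
    exact h.symm
  have hYdiag : Vᴴ * (Pᴴ * X * P) * V = Matrix.diagonal (fun j => (hY.eigenvalues j : ℂ)) := by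
    have h := hY.conjStarAlgAut_star_eigenvectorUnitary
    simp only [Unitary.conjStarAlgAut_star_apply, Unitary.coe_star, Matrix.star_eq_conjTranspose] at h
    exact h
  have hMDM : Mᴴ * (Matrix.diagonal (fun i => (hX.eigenvalues i : ℂ))) * M
      = Matrix.diagonal (fun j => (hY.eigenvalues j : ℂ)) := by
    rw [hMH, hMdef, ← hYdiag]
    calc Vᴴ * Pᴴ * U * Matrix.diagonal (fun i => (hX.eigenvalues i : ℂ)) * (Uᴴ * P * V)
        = Vᴴ * (Pᴴ * (U * Matrix.diagonal (fun i => (hX.eigenvalues i : ℂ)) * Uᴴ) * P) * V := by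
          simp only [Matrix.mul_assoc]
      _ = Vᴴ * (Pᴴ * X * P) * V := by rw [hXspec]
  have hq : ∀ c : Fin d' → ℂ, ∑ j, hY.eigenvalues j * Complex.normSq (c j)
      = ∑ i, hX.eigenvalues i * Complex.normSq ((M.mulVecLin c) i) := by
    intro c
    apply Complex.ofReal_injective
    calc ((∑ j, hY.eigenvalues j * Complex.normSq (c j) : ℝ) : ℂ)
        = star c ⬝ᵥ ((Matrix.diagonal (fun j => (hY.eigenvalues j : ℂ))) *ᵥ c) :=
          (diag_dot _ _).symm
      _ = star (M *ᵥ c) ⬝ᵥ ((Matrix.diagonal (fun i => (hX.eigenvalues i : ℂ))) *ᵥ (M *ᵥ c)) := by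
          rw [conj_dot, hMDM]
      _ = ((∑ i, hX.eigenvalues i * Complex.normSq ((M *ᵥ c) i) : ℝ) : ℂ) := diag_dot _ _
  have hn : ∀ c : Fin d' → ℂ, ∑ j, Complex.normSq (c j)
      = ∑ i, Complex.normSq ((M.mulVecLin c) i) := by
    intro c
    apply Complex.ofReal_injective
    have d1 : ∀ {m : ℕ} (x : Fin m → ℂ),
        star x ⬝ᵥ ((1 : Matrix (Fin m) (Fin m) ℂ) *ᵥ x) = ((∑ i, Complex.normSq (x i) : ℝ) : ℂ) := by
      intro m x
      have := diag_dot (fun _ : Fin m => (1 : ℝ)) x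
      simpa using this
    calc ((∑ j, Complex.normSq (c j) : ℝ) : ℂ)
        = star c ⬝ᵥ ((1 : Matrix (Fin d') (Fin d') ℂ) *ᵥ c) := (d1 c).symm
      _ = star c ⬝ᵥ ((Mᴴ * (1 : Matrix (Fin d) (Fin d) ℂ) * M) *ᵥ c) := by
          rw [Matrix.mul_one, hMM]
      _ = star (M *ᵥ c) ⬝ᵥ ((1 : Matrix (Fin d) (Fin d) ℂ) *ᵥ (M *ᵥ c)) := (conj_dot M 1 c).symm
      _ = ((∑ i, Complex.normSq ((M *ᵥ c) i) : ℝ) : ℂ) := d1 _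
  constructor
  · refine core_count M.mulVecLin hY.eigenvalues hX.eigenvalues t hq hn _ _
      (fun j hj => (Finset.mem_filter.mp hj).2) (fun i hi => ?_)
    have : ¬ t ≤ hX.eigenvalues i := fun h => hi (Finset.mem_filter.mpr ⟨Finset.mem_univ _, h⟩)
    linarith
  · refine core_count M.mulVecLin (fun j => -hY.eigenvalues j) (fun i => -hX.eigenvalues i) (-t)
      (fun c => ?_) hn _ _ (fun j hj => ?_) (fun i hi => ?_)
    · have := hq c
      simp only [neg_mul, Finset.sum_neg_distrib]
      rw [this]
    · exact neg_le_neg (Finset.mem_filter.mp hj).2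
    · have h1 : ¬ hX.eigenvalues i ≤ t := fun h => hi (Finset.mem_filter.mpr ⟨Finset.mem_univ _, h⟩)
      have h2 := lt_of_not_ge h1
      show -hX.eigenvalues i < -t
      linarith

private lemma bad_count {d d' : ℕ} (X : Matrix (Fin d) (Fin d) ℂ) (hX : X.IsHermitian)
    (P : Matrix (Fin d) (Fin d') ℂ) (hP : Pᴴ * P = 1)
    (hY : (Pᴴ * X * P).IsHermitian) (α ε : ℝ) (hε : 0 < ε) :
    (Finset.univ.filter fun j => ε ≤ |hY.eigenvalues j - α|).card
      ≤ 2 * (Finset.univ.filter fun i => ε ≤ |hX.eigenvalues i - α|).card := by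
  classical
  have hsplit : (Finset.univ.filter fun j => ε ≤ |hY.eigenvalues j - α|)
      ⊆ (Finset.univ.filter fun j => α + ε ≤ hY.eigenvalues j)
        ∪ (Finset.univ.filter fun j => hY.eigenvalues j ≤ α - ε) := by
    intro j hj
    have h := (Finset.mem_filter.mp hj).2
    rcases le_abs.mp h with h' | h'
    · exact Finset.mem_union_left _ (Finset.mem_filter.mpr ⟨Finset.mem_univ _, by linarith⟩)
    · exact Finset.mem_union_right _ (Finset.mem_filter.mpr ⟨Finset.mem_univ _, by linarith⟩)
  have hge := (count_lemma X hX P hP hY (α + ε)).1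
  have hle := (count_lemma X hX P hP hY (α - ε)).2
  have hsub1 : (Finset.univ.filter fun i => α + ε ≤ hX.eigenvalues i)
      ⊆ (Finset.univ.filter fun i => ε ≤ |hX.eigenvalues i - α|) := by
    intro i hi
    have h := (Finset.mem_filter.mp hi).2
    exact Finset.mem_filter.mpr ⟨Finset.mem_univ _, le_abs.mpr (Or.inl (by linarith))⟩
  have hsub2 : (Finset.univ.filter fun i => hX.eigenvalues i ≤ α - ε)
      ⊆ (Finset.univ.filter fun i => ε ≤ |hX.eigenvalues i - α|) := by
    intro i hi
    have h := (Finset.mem_filter.mp hi).2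
    exact Finset.mem_filter.mpr ⟨Finset.mem_univ _, le_abs.mpr (Or.inr (by linarith))⟩
  calc (Finset.univ.filter fun j => ε ≤ |hY.eigenvalues j - α|).card
      ≤ ((Finset.univ.filter fun j => α + ε ≤ hY.eigenvalues j)
          ∪ (Finset.univ.filter fun j => hY.eigenvalues j ≤ α - ε)).card :=
        Finset.card_le_card hsplit
    _ ≤ (Finset.univ.filter fun j => α + ε ≤ hY.eigenvalues j).card
        + (Finset.univ.filter fun j => hY.eigenvalues j ≤ α - ε).card :=
        Finset.card_union_le _ _
    _ ≤ (Finset.univ.filter fun i => α + ε ≤ hX.eigenvalues i).card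
        + (Finset.univ.filter fun i => hX.eigenvalues i ≤ α - ε).card := by
        exact Nat.add_le_add hge hle
    _ ≤ (Finset.univ.filter fun i => ε ≤ |hX.eigenvalues i - α|).card
        + (Finset.univ.filter fun i => ε ≤ |hX.eigenvalues i - α|).card :=
        Nat.add_le_add (Finset.card_le_card hsub1) (Finset.card_le_card hsub2)
    _ = 2 * (Finset.univ.filter fun i => ε ≤ |hX.eigenvalues i - α|).card := by ring


theorem extradim_compression_eig_const
    (d d' : ℕ → ℕ)
    (hd : Tendsto d atTop atTop)
    (hlt : ∀ n, d' n < d n)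
    (X : ∀ n, Matrix (Fin (d n)) (Fin (d n)) ℂ)
    (hX : ∀ n, (X n).IsHermitian)
    (P : ∀ n, Matrix (Fin (d n)) (Fin (d' n)) ℂ)
    (hP : ∀ n, (P n)ᴴ * P n = 1)
    (hliminf : 0 < atTop.liminf fun n => (d' n : ℝ) / (d n : ℝ))
    (α : ℝ)
    (hXdist : DistributedEigConst α X) :
    DistributedEigConst α (fun n => (P n)ᴴ * X n * P n) := by
  classical
  intro F hF hFc
  have hY : ∀ n, ((P n)ᴴ * X n * P n).IsHermitian := fun n =>
    Matrix.isHermitian_conjTranspose_mul_mul (P n) (hX n)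
  obtain ⟨C₀, hC₀⟩ := hF.bounded_above_of_compact_support hFc
  set C : ℝ := max C₀ 0 with hCdef
  have hC : ∀ z, ‖F z‖ ≤ C := fun z => le_trans (hC₀ z) (le_max_left _ _)
  have hC0 : (0 : ℝ) ≤ C := le_max_right _ _
  rw [Metric.tendsto_atTop]
  intro ε' hε'
  -- continuity of F at α
  obtain ⟨ε, hε, hFcont⟩ : ∃ ε > (0:ℝ), ∀ z : ℂ, dist z (α : ℂ) < ε →
      dist (F z) (F (α : ℂ)) < ε' / 4 := by
    have hca : ContinuousAt F (α : ℂ) := hF.continuousAt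
    obtain ⟨δ, hδ, h⟩ := Metric.continuousAt_iff.mp hca (ε' / 4) (by linarith)
    exact ⟨δ, hδ, fun z hz => h hz⟩
  -- the bump function
  set g : ℝ → ℝ := fun s => max 0 (1 - ε⁻¹ * |s - α|) with hgdef
  set G : ℂ → ℂ := fun z => ((max 0 (1 - ε⁻¹ * ‖z - (α:ℂ)‖) : ℝ) : ℂ) with hGdef
  have hGg : ∀ s : ℝ, G (s : ℂ) = ((g s : ℝ) : ℂ) := by
    intro s
    simp only [hGdef, hgdef, ← Complex.ofReal_sub, Complex.norm_real, Real.norm_eq_abs]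
  have hGcont : Continuous G := by
    apply Complex.continuous_ofReal.comp
    exact continuous_const.max (continuous_const.sub (continuous_const.mul
      (continuous_norm.comp (continuous_id.sub continuous_const))))
  have hGsupp : HasCompactSupport G := by
    apply HasCompactSupport.intro (isCompact_closedBall (α : ℂ) ε)
    intro z hz
    have hzd : ε < dist z (α : ℂ) := by
      by_contra h
      exact hz (Metric.mem_closedBall.mpr (le_of_not_gt h))
    rw [Complex.dist_eq] at hzd
    have hneg : 1 - ε⁻¹ * ‖z - (α : ℂ)‖ ≤ 0 := by
      have h1 : 1 < ε⁻¹ * ‖z - (α : ℂ)‖ := by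
        rw [← inv_mul_cancel₀ (ne_of_gt hε)]
        exact mul_lt_mul_of_pos_left hzd (inv_pos.mpr hε)
      linarith
    simp only [hGdef]
    rw [max_eq_left hneg]
    simp
  have hGα : G (α : ℂ) = 1 := by simp [hGdef]
  have hXlim := hXdist G hGcont hGsupp
  rw [hGα] at hXlim
  -- real-valued averages of g over eigenvalues of X n
  set avg : ℕ → ℝ := fun n => ((d n : ℝ))⁻¹ * ∑ i, g ((hX n).eigenvalues i) with havg
  have havglim : Tendsto avg atTop (𝓝 1) := by
    have hrw : ∀ n, ((Fintype.card (Fin (d n)) : ℕ) : ℂ)⁻¹ * eigSum G (X n)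
        = ((avg n : ℝ) : ℂ) := by
      intro n
      rw [eigSum_isHermitian G (X n) (hX n)]
      simp only [Fintype.card_fin, havg, Complex.ofReal_mul, Complex.ofReal_inv,
        Complex.ofReal_natCast, Complex.ofReal_sum]
      congr 1
      exact Finset.sum_congr rfl fun i _ => hGg _
    have h2 : Tendsto (fun n => ((avg n : ℝ) : ℂ)) atTop (𝓝 (1 : ℂ)) :=
      Tendsto.congr (fun n => hrw n) hXlim
    have h3 := (Complex.continuous_re.tendsto (1 : ℂ)).comp h2
    simpa [Function.comp_def] using h3
  -- bad sets for X
  set badX : ℕ → ℕ := fun n =>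
    (Finset.univ.filter fun i => ε ≤ |(hX n).eigenvalues i - α|).card with hbadX
  have hbadX_le : ∀ n, (badX n : ℝ) ≤ (d n : ℝ) * (1 - avg n) := by
    intro n
    have hdpos' : 0 < d n := lt_of_le_of_lt (Nat.zero_le _) (hlt n)
    have hterm : ∀ i ∈ (Finset.univ.filter fun i => ε ≤ |(hX n).eigenvalues i - α|),
        (1 : ℝ) ≤ 1 - g ((hX n).eigenvalues i) := by
      intro i hi
      have h := (Finset.mem_filter.mp hi).2
      have hg0 : g ((hX n).eigenvalues i) = 0 := by
        have h2 : 1 ≤ ε⁻¹ * |(hX n).eigenvalues i - α| := by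
          rw [← inv_mul_cancel₀ (ne_of_gt hε)]
          exact mul_le_mul_of_nonneg_left h (inv_pos.mpr hε).le
        simp only [hgdef]
        exact max_eq_left (by linarith)
      rw [hg0]
      norm_num
    have hnn : ∀ i ∈ Finset.univ, (0 : ℝ) ≤ 1 - g ((hX n).eigenvalues i) := by
      intro i _
      have hgle : g ((hX n).eigenvalues i) ≤ 1 := by
        simp only [hgdef]
        apply max_le
        · norm_num
        · have : 0 ≤ ε⁻¹ * |(hX n).eigenvalues i - α| :=
            mul_nonneg (inv_pos.mpr hε).le (abs_nonneg _)
          linarith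
      linarith
    have hdne : ((d n : ℝ)) ≠ 0 := Nat.cast_ne_zero.mpr hdpos'.ne'
    calc (badX n : ℝ)
        = ∑ _i ∈ (Finset.univ.filter fun i => ε ≤ |(hX n).eigenvalues i - α|), (1 : ℝ) := by
          rw [Finset.sum_const]; simp [hbadX]
      _ ≤ ∑ i ∈ (Finset.univ.filter fun i => ε ≤ |(hX n).eigenvalues i - α|),
            (1 - g ((hX n).eigenvalues i)) := Finset.sum_le_sum hterm
      _ ≤ ∑ i, (1 - g ((hX n).eigenvalues i)) :=
          Finset.sum_le_sum_of_subset_of_nonneg (Finset.filter_subset _ _)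
            (fun i hi _ => hnn i hi)
      _ = (d n : ℝ) - ∑ i, g ((hX n).eigenvalues i) := by
          rw [Finset.sum_sub_distrib, Finset.sum_const]
          simp
      _ = (d n : ℝ) * (1 - avg n) := by
          simp only [havg]
          rw [mul_sub, mul_one, ← mul_assoc, mul_inv_cancel₀ hdne, one_mul]
  -- liminf constant
  set γ : ℝ := (atTop.liminf fun n => (d' n : ℝ) / (d n : ℝ)) / 2 with hγdef
  have hγpos : 0 < γ := half_pos hliminf
  have evγ : ∀ᶠ n in atTop, γ < (d' n : ℝ) / (d n : ℝ) :=
    Filter.eventually_lt_of_lt_liminf (half_lt_self hliminf)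
      ⟨0, Filter.eventually_map.mpr (Filter.Eventually.of_forall fun n =>
        div_nonneg (Nat.cast_nonneg _) (Nat.cast_nonneg _))⟩
  set η : ℝ := γ * ε' / (8 * (C + 1)) with hηdef
  have hη : 0 < η := by
    apply div_pos (mul_pos hγpos hε')
    nlinarith
  have hfraclim : Tendsto (fun n => 1 - avg n) atTop (𝓝 0) := by
    have := tendsto_const_nhds (x := (1:ℝ)) (f := atTop (α := ℕ)) |>.sub havglim
    simpa using this
  have evfrac : ∀ᶠ n in atTop, 1 - avg n < η :=
    hfraclim.eventually (gt_mem_nhds hη)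
  obtain ⟨N, hN⟩ := Filter.eventually_atTop.mp ((evγ.and evfrac))
  refine ⟨N, fun n hn => ?_⟩
  obtain ⟨hγn, hfn⟩ := hN n hn
  -- per-n quantities
  have hdposn : 0 < d n := lt_of_le_of_lt (Nat.zero_le _) (hlt n)
  have hdpos : (0 : ℝ) < (d n : ℝ) := by exact_mod_cast hdposn
  have hdfrac : (0:ℝ) < (d' n : ℝ) / (d n : ℝ) := lt_trans hγpos hγn
  have hk : (0 : ℝ) < (d' n : ℝ) := by
    rcases div_pos_iff.mp hdfrac with ⟨h1, _⟩ | ⟨_, h2⟩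
    · exact h1
    · linarith
  have hkC : ((d' n : ℕ) : ℂ) ≠ 0 := by
    exact_mod_cast ne_of_gt (by exact_mod_cast hk : (0:ℝ) < ((d' n : ℕ) : ℝ))
  have hkγ : γ * (d n : ℝ) ≤ (d' n : ℝ) := ((lt_div_iff₀ hdpos).mp hγn).le
  have hbadn : (badX n : ℝ) ≤ η * (d n : ℝ) := by
    calc (badX n : ℝ) ≤ (d n : ℝ) * (1 - avg n) := hbadX_le n
      _ ≤ (d n : ℝ) * η := mul_le_mul_of_nonneg_left hfn.le hdpos.le
      _ = η * (d n : ℝ) := mul_comm _ _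
  -- bad set for Y n
  set μ : Fin (d' n) → ℝ := (hY n).eigenvalues with hμdef
  set S : Finset (Fin (d' n)) := Finset.univ.filter fun j => ε ≤ |μ j - α| with hSdef
  have hbadY : (S.card : ℝ) ≤ 2 * (badX n : ℝ) := by
    have := bad_count (X n) (hX n) (P n) (hP n) (hY n) α ε hε
    exact_mod_cast this
  -- rewrite the distance
  have hrwY : ((Fintype.card (Fin (d' n)) : ℕ) : ℂ)⁻¹ * eigSum F ((P n)ᴴ * X n * P n)
      = ((d' n : ℕ) : ℂ)⁻¹ * ∑ j, F ((μ j : ℝ) : ℂ) := by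
    rw [eigSum_isHermitian F _ (hY n)]
    simp only [Fintype.card_fin, hμdef]
  have key : dist (((d' n : ℕ) : ℂ)⁻¹ * ∑ j, F ((μ j : ℝ) : ℂ)) (F (α : ℂ))
      ≤ ((d' n : ℝ))⁻¹ * ∑ j, ‖F ((μ j : ℝ) : ℂ) - F ((α : ℝ) : ℂ)‖ := by
    rw [dist_eq_norm]
    have heq : ((d' n : ℕ) : ℂ)⁻¹ * (∑ j, F ((μ j : ℝ) : ℂ)) - F ((α : ℝ) : ℂ)
        = ((d' n : ℕ) : ℂ)⁻¹ * ∑ j, (F ((μ j : ℝ) : ℂ) - F ((α : ℝ) : ℂ)) := by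
      rw [Finset.sum_sub_distrib, mul_sub]
      congr 1
      rw [Finset.sum_const, Finset.card_univ, Fintype.card_fin, nsmul_eq_mul,
        ← mul_assoc, inv_mul_cancel₀ hkC, one_mul]
    rw [heq, norm_mul, norm_inv]
    have hnrm : ‖((d' n : ℕ) : ℂ)‖ = ((d' n : ℝ)) := by
      rw [Complex.norm_natCast]
    rw [hnrm]
    exact mul_le_mul_of_nonneg_left (norm_sum_le _ _) (inv_nonneg.mpr hk.le)
  -- estimate the sum
  have hsum : ∑ j, ‖F ((μ j : ℝ) : ℂ) - F ((α : ℝ) : ℂ)‖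
      ≤ (d' n : ℝ) * (ε' / 4) + (S.card : ℝ) * (2 * C) := by
    have hsplit := Finset.sum_filter_add_sum_filter_not Finset.univ
      (fun j => ε ≤ |μ j - α|) (fun j => ‖F ((μ j : ℝ) : ℂ) - F ((α : ℝ) : ℂ)‖)
    have h1 : ∑ j ∈ S, ‖F ((μ j : ℝ) : ℂ) - F ((α : ℝ) : ℂ)‖ ≤ (S.card : ℝ) * (2 * C) := by
      have := Finset.sum_le_card_nsmul S (fun j => ‖F ((μ j : ℝ) : ℂ) - F ((α : ℝ) : ℂ)‖)
        (2 * C) (fun j _ => by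
          calc ‖F ((μ j : ℝ) : ℂ) - F ((α : ℝ) : ℂ)‖
              ≤ ‖F ((μ j : ℝ) : ℂ)‖ + ‖F ((α : ℝ) : ℂ)‖ := norm_sub_le _ _
            _ ≤ 2 * C := by have := hC ((μ j : ℝ) : ℂ); have := hC ((α : ℝ) : ℂ); linarith)
      simpa [nsmul_eq_mul] using this
    have h2 : ∑ j ∈ Finset.univ.filter (fun j => ¬ ε ≤ |μ j - α|),
        ‖F ((μ j : ℝ) : ℂ) - F ((α : ℝ) : ℂ)‖ ≤ (d' n : ℝ) * (ε' / 4) := by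
      have hb : ∀ j ∈ Finset.univ.filter (fun j => ¬ ε ≤ |μ j - α|),
          ‖F ((μ j : ℝ) : ℂ) - F ((α : ℝ) : ℂ)‖ ≤ ε' / 4 := by
        intro j hj
        have hj2 := (Finset.mem_filter.mp hj).2
        have habs : |μ j - α| < ε := lt_of_not_ge hj2
        have hdist : dist ((μ j : ℝ) : ℂ) ((α : ℝ) : ℂ) < ε := by
          rw [Complex.dist_eq, ← Complex.ofReal_sub, Complex.norm_real, Real.norm_eq_abs]
          exact habs
        have := hFcont _ hdist
        rw [dist_eq_norm] at this
        linarith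
      have := Finset.sum_le_card_nsmul _ _ (ε' / 4) hb
      have hcard : ((Finset.univ.filter (fun j => ¬ ε ≤ |μ j - α|)).card : ℝ) ≤ (d' n : ℝ) := by
        have := Finset.card_filter_le Finset.univ (fun j => ¬ ε ≤ |μ j - α|)
        rw [Finset.card_univ, Fintype.card_fin] at this
        exact_mod_cast this
      calc ∑ j ∈ Finset.univ.filter (fun j => ¬ ε ≤ |μ j - α|),
            ‖F ((μ j : ℝ) : ℂ) - F ((α : ℝ) : ℂ)‖
          ≤ ((Finset.univ.filter (fun j => ¬ ε ≤ |μ j - α|)).card : ℝ) * (ε' / 4) := by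
            simpa [nsmul_eq_mul] using this
        _ ≤ (d' n : ℝ) * (ε' / 4) :=
            mul_le_mul_of_nonneg_right hcard (by linarith)
    have hSsum : ∑ j ∈ S, ‖F ((μ j : ℝ) : ℂ) - F ((α : ℝ) : ℂ)‖
        + ∑ j ∈ Finset.univ.filter (fun j => ¬ ε ≤ |μ j - α|),
            ‖F ((μ j : ℝ) : ℂ) - F ((α : ℝ) : ℂ)‖
        = ∑ j, ‖F ((μ j : ℝ) : ℂ) - F ((α : ℝ) : ℂ)‖ := by
      rw [hSdef]; exact hsplit
    linarith
  -- numeric estimate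
  have e1 : (S.card : ℝ) * (2 * C) ≤ 4 * C * (η * (d n : ℝ)) := by
    nlinarith [hbadY, hbadn, hC0]
  have e2 : 4 * C * (η * (d n : ℝ)) ≤ (d' n : ℝ) * ε' / 2 := by
    have h21 : 4 * C * (η * (d n : ℝ)) = (γ * (d n : ℝ) * ε' / 2) * (C / (C + 1)) := by
      rw [hηdef]
      field_simp
      ring
    have h22 : C / (C + 1) ≤ 1 := by
      rw [div_le_one (by linarith)]
      linarith
    have h23 : (0:ℝ) ≤ γ * (d n : ℝ) * ε' / 2 := by positivity
    calc 4 * C * (η * (d n : ℝ)) = (γ * (d n : ℝ) * ε' / 2) * (C / (C + 1)) := h21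
      _ ≤ (γ * (d n : ℝ) * ε' / 2) * 1 := mul_le_mul_of_nonneg_left h22 h23
      _ = γ * (d n : ℝ) * ε' / 2 := mul_one _
      _ ≤ (d' n : ℝ) * ε' / 2 := by
          apply div_le_div_of_nonneg_right ?_ (by norm_num)
          exact mul_le_mul_of_nonneg_right hkγ hε'.le
  have hfinal : ∑ j, ‖F ((μ j : ℝ) : ℂ) - F ((α : ℝ) : ℂ)‖ < (d' n : ℝ) * ε' := by
    have : (d' n : ℝ) * (ε' / 4) + (d' n : ℝ) * ε' / 2 < (d' n : ℝ) * ε' := by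
      nlinarith
    linarith
  have hlast : ((d' n : ℝ))⁻¹ * ∑ j, ‖F ((μ j : ℝ) : ℂ) - F ((α : ℝ) : ℂ)‖ < ε' := by
    have := mul_lt_mul_of_pos_left hfinal (inv_pos.mpr hk)
    rwa [← mul_assoc, inv_mul_cancel₀ hk.ne', one_mul] at this
  calc dist (((Fintype.card (Fin (d' n)) : ℕ) : ℂ)⁻¹ * eigSum F ((P n)ᴴ * X n * P n)) (F (α : ℂ))
      = dist (((d' n : ℕ) : ℂ)⁻¹ * ∑ j, F ((μ j : ℝ) : ℂ)) (F (α : ℂ)) := by rw [hrwY]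
    _ ≤ ((d' n : ℝ))⁻¹ * ∑ j, ‖F ((μ j : ℝ) : ℂ) - F ((α : ℝ) : ℂ)‖ := key
    _ < ε' := hlast

end
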